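/- Every sequence of 30 integers g₁,…,g₃₀ contains a subset J of exactly 16 indices such that Σ_{i<j, i,j∈J} g_i g_j ≡ 0 (mod 8). That is, EGZ_{16}^{(2)}(ℤ_8) ≤ 30. -/

import Mathlib

set_option maxHeartbeats 1000000

open Finset

/-- The `m`-th elementary symmetric expression of the subsequence of `g` selected
by the index set `J`. -/
def eSym {n : ℕ} {R : Type*} [CommRing R] (m : ℕ) (g : Fin n → R) (J : Finset (Fin n)) : R :=
  ∑ T ∈ J.powersetCard m, ∏ i ∈ T, g i

namespace EGZAux

open MvPolynomial

/-- If `choose (m + (2^k - 1)) (2^k - 1)` is odd then `2^k ∣ m` (iterated Lucas). -/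
lemma key_parity (k : ℕ) : ∀ m : ℕ, Odd ((m + (2^k - 1)).choose (2^k - 1)) → 2^k ∣ m := by
  induction k with
  | zero => simp
  | succ k ih =>
    intro m hm
    haveI : Fact (Nat.Prime 2) := ⟨Nat.prime_two⟩
    have L : (m + (2^(k+1) - 1)).choose (2^(k+1) - 1) % 2 =
        (((m + (2^(k+1)-1)) % 2).choose ((2^(k+1)-1) % 2) *
          ((m + (2^(k+1)-1)) / 2).choose ((2^(k+1)-1) / 2)) % 2 :=
      Choose.choose_modEq_choose_mod_mul_choose_div_nat
    have hK : (2^(k+1) - 1) % 2 = 1 := by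
      have : 0 < 2^(k+1) := Nat.pow_pos (by norm_num)
      omega
    have hK2 : (2^(k+1) - 1) / 2 = 2^k - 1 := by
      have h1 : 2^(k+1) = 2 * 2^k := by ring
      have : 0 < 2^k := Nat.pow_pos (by norm_num)
      omega
    rw [hK, hK2] at L
    rw [Nat.odd_iff] at hm
    have hodd : Odd (((m + (2^(k+1)-1)) % 2).choose 1 *
        ((m + (2^(k+1)-1)) / 2).choose (2^k - 1)) := by
      rw [Nat.odd_iff]; omega
    rw [Nat.odd_mul] at hodd
    obtain ⟨h1, h2⟩ := hodd
    rw [Nat.choose_one_right, Nat.odd_iff] at h1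
    have hme : m % 2 = 0 := by
      have : 0 < 2^(k+1) := Nat.pow_pos (by norm_num)
      have h2K : 2^(k+1) = 2 * 2^k := by ring
      omega
    have hdiv : (m + (2^(k+1)-1)) / 2 = m / 2 + (2^k - 1) := by
      have h2K : 2^(k+1) = 2 * 2^k := by ring
      have : 0 < 2^k := Nat.pow_pos (by norm_num)
      omega
    rw [hdiv] at h2
    obtain ⟨c, hc⟩ := ih (m / 2) h2
    refine ⟨c, ?_⟩
    have hm2 : m = 2 * (m / 2) := by omega
    rw [hm2, hc, pow_succ]; ring

lemma pair_cancel {n : ℕ} (i : Fin n) (f : Finset (Fin n) → ℚ)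
    (hf : ∀ S : Finset (Fin n), i ∉ S → f (insert i S) = f S) :
    ∑ S ∈ (univ : Finset (Fin n)).powerset, (-1 : ℚ)^S.card * f S = 0 := by
  have hu : (univ : Finset (Fin n)) = insert i (univ.erase i) := by
    rw [Finset.insert_erase (mem_univ i)]
  rw [hu, Finset.sum_powerset_insert (Finset.notMem_erase i univ)]
  rw [← Finset.sum_add_distrib]
  refine Finset.sum_eq_zero fun S hS => ?_
  have hiS : i ∉ S := fun h => Finset.notMem_erase i univ (Finset.mem_powerset.mp hS h)
  rw [hf S hiS, Finset.card_insert_of_notMem hiS, pow_succ]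
  ring

/-- Alternating sum over the Boolean cube of a polynomial of total degree `< n` vanishes. -/
lemma alt_sum_zero {n : ℕ} (F : MvPolynomial (Fin n) ℚ) (h : F.totalDegree < n) :
    ∑ S ∈ (univ : Finset (Fin n)).powerset,
      (-1 : ℚ)^S.card * eval (fun i => if i ∈ S then (1:ℚ) else 0) F = 0 := by
  have heval : ∀ S : Finset (Fin n),
      (-1 : ℚ)^S.card * eval (fun i => if i ∈ S then (1:ℚ) else 0) F =
      ∑ d ∈ F.support, (-1 : ℚ)^S.card *
        (coeff d F * ∏ i ∈ d.support, (if i ∈ S then (1:ℚ) else 0) ^ d i) := by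
    intro S
    rw [MvPolynomial.eval_eq, Finset.mul_sum]
  rw [Finset.sum_congr rfl fun S _ => heval S, Finset.sum_comm]
  refine Finset.sum_eq_zero fun d hd => ?_
  have hdeg : ∑ i, d i < n := by
    have hle := MvPolynomial.le_totalDegree hd
    calc ∑ i, d i = d.sum fun _ e => e := by
          rw [Finsupp.sum_fintype]; intro; rfl
      _ ≤ F.totalDegree := hle
      _ < n := h
  have hex : ∃ i, d i = 0 := by
    by_contra hc
    push_neg at hc
    have h1 : ∀ i, 1 ≤ d i := fun i => Nat.one_le_iff_ne_zero.mpr (hc i)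
    have h2 : (n : ℕ) ≤ ∑ i, d i := by
      calc (n:ℕ) = ∑ _i : Fin n, 1 := by simp
        _ ≤ ∑ i, d i := Finset.sum_le_sum fun i _ => h1 i
    omega
  obtain ⟨i, hi⟩ := hex
  refine pair_cancel i _ fun S hiS => ?_
  congr 1
  refine Finset.prod_congr rfl fun j hj => ?_
  have hji : j ≠ i := fun h => by
    rw [h] at hj; exact (Finsupp.mem_support_iff.mp hj) hi
  simp [Finset.mem_insert, hji]

lemma ratProd (m : ℕ) : ∀ k : ℕ,
    ∏ j ∈ range k, ((m : ℚ) + (j + 1)) = (k.factorial : ℚ) * ((m + k).choose k : ℚ) := by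
  intro k
  induction k with
  | zero => simp
  | succ k ih =>
    rw [Finset.prod_range_succ, ih]
    have key : (m + k + 1) * (m + k).choose k = (m + k + 1).choose (k + 1) * (k + 1) :=
      Nat.add_one_mul_choose_eq (m + k) k
    have keyQ : ((m : ℚ) + k + 1) * ((m + k).choose k : ℚ)
        = ((m + k + 1).choose (k + 1) : ℚ) * ((k : ℚ) + 1) := by exact_mod_cast key
    rw [Nat.factorial_succ]
    push_cast
    ring_nf
    ring_nf at keyQ
    linear_combination (k.factorial : ℚ) * keyQ

variable {n : ℕ} (h : Fin n → ℕ)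

/-- The indicator function of a subset. -/
def chi (S : Finset (Fin n)) : Fin n → ℚ := fun i => if i ∈ S then 1 else 0

noncomputable def Ppoly : MvPolynomial (Fin n) ℚ :=
  ∑ T ∈ (univ : Finset (Fin n)).powersetCard 2, (C (∏ i ∈ T, (h i : ℚ))) * ∏ i ∈ T, X i

noncomputable def Qpoly : MvPolynomial (Fin n) ℚ := ∑ i : Fin n, X i

def pval (S : Finset (Fin n)) : ℕ := ∑ T ∈ S.powersetCard 2, ∏ i ∈ T, h i

lemma prod_chi (S T : Finset (Fin n)) :
    ∏ i ∈ T, chi S i = if T ⊆ S then (1:ℚ) else 0 := by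
  split_ifs with hts
  · exact Finset.prod_eq_one fun i hi => by simp [chi, hts hi]
  · obtain ⟨i, hiT, hiS⟩ := Finset.not_subset.mp hts
    exact Finset.prod_eq_zero hiT (by simp [chi, hiS])

lemma eval_Ppoly (S : Finset (Fin n)) : eval (chi S) (Ppoly h) = (pval h S : ℚ) := by
  rw [Ppoly, map_sum]
  have hc : ∀ T ∈ (univ : Finset (Fin n)).powersetCard 2,
      eval (chi S) ((C (∏ i ∈ T, (h i : ℚ))) * ∏ i ∈ T, X i) =
      if T ⊆ S then (∏ i ∈ T, (h i : ℚ)) else 0 := by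
    intro T _
    rw [map_mul, eval_C, map_prod]
    simp only [eval_X]
    rw [prod_chi]
    split_ifs <;> ring
  rw [Finset.sum_congr rfl hc, ← Finset.sum_filter]
  have hfe : ((univ : Finset (Fin n)).powersetCard 2).filter (· ⊆ S) = S.powersetCard 2 := by
    ext T
    simp [Finset.mem_powersetCard, Finset.mem_filter, and_comm]
  rw [hfe, pval]
  push_cast
  rfl

lemma eval_Qpoly (S : Finset (Fin n)) : eval (chi S) (Qpoly (n := n)) = (S.card : ℚ) := by
  rw [Qpoly, map_sum]
  simp only [eval_X, chi]
  rw [Finset.sum_ite_mem, Finset.univ_inter, Finset.sum_const, nsmul_eq_mul, mul_one]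

lemma td_Ppoly : (Ppoly h).totalDegree ≤ 2 := by
  refine (MvPolynomial.totalDegree_finset_sum _ _).trans ?_
  refine Finset.sup_le fun T hT => ?_
  have hT2 : T.card = 2 := (Finset.mem_powersetCard.mp hT).2
  calc ((C (∏ i ∈ T, (h i : ℚ))) * ∏ i ∈ T, X i).totalDegree
      ≤ (C (∏ i ∈ T, (h i : ℚ)) : MvPolynomial (Fin n) ℚ).totalDegree
        + (∏ i ∈ T, (X i : MvPolynomial (Fin n) ℚ)).totalDegree := totalDegree_mul _ _
    _ ≤ 0 + ∑ i ∈ T, (X i : MvPolynomial (Fin n) ℚ).totalDegree := by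
        gcongr
        · exact le_of_eq (totalDegree_C _)
        · exact totalDegree_finset_prod _ _
    _ ≤ 2 := by
        simp only [totalDegree_X, zero_add, Finset.sum_const, smul_eq_mul, mul_one, hT2]
        exact le_rfl

lemma td_Qpoly : (Qpoly (n := n)).totalDegree ≤ 1 := by
  refine (MvPolynomial.totalDegree_finset_sum _ _).trans ?_
  exact Finset.sup_le fun i _ => le_of_eq (totalDegree_X i)

noncomputable def Fpoly : MvPolynomial (Fin n) ℚ :=
  (((Nat.factorial 7 : ℚ))⁻¹ * ((Nat.factorial 15 : ℚ))⁻¹) •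
    ((∏ j ∈ range 7, (Ppoly h + C ((j : ℚ) + 1))) *
     (∏ j ∈ range 15, (Qpoly (n := n) + C ((j : ℚ) + 1))))

lemma eval_Fpoly (S : Finset (Fin n)) :
    eval (chi S) (Fpoly h) =
      (((pval h S + 7).choose 7 : ℚ)) * (((S.card + 15).choose 15 : ℚ)) := by
  rw [Fpoly, MvPolynomial.smul_eq_C_mul]
  simp only [map_mul, eval_C, map_prod]
  have e1 : ∀ j ∈ range 7, eval (chi S) (Ppoly h + C ((j : ℚ) + 1))
      = (pval h S : ℚ) + ((j : ℚ) + 1) := by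
    intro j _; rw [map_add, eval_C, eval_Ppoly]
  have e2 : ∀ j ∈ range 15, eval (chi S) (Qpoly (n := n) + C ((j : ℚ) + 1))
      = (S.card : ℚ) + ((j : ℚ) + 1) := by
    intro j _; rw [map_add, eval_C, eval_Qpoly]
  rw [Finset.prod_congr rfl e1, Finset.prod_congr rfl e2, ratProd, ratProd]
  have h7 : (Nat.factorial 7 : ℚ) ≠ 0 := by positivity
  have h15 : (Nat.factorial 15 : ℚ) ≠ 0 := by positivity
  generalize ((pval h S + 7).choose 7 : ℚ) = A
  generalize ((S.card + 15).choose 15 : ℚ) = B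
  field_simp

lemma td_Fpoly : (Fpoly h).totalDegree ≤ 29 := by
  rw [Fpoly]
  refine (MvPolynomial.totalDegree_smul_le _ _).trans ?_
  refine (MvPolynomial.totalDegree_mul _ _).trans ?_
  have step1 : ∀ j ∈ range 7, (Ppoly h + C ((j : ℚ) + 1)).totalDegree ≤ 2 := by
    intro j _
    refine (MvPolynomial.totalDegree_add _ _).trans ?_
    simp only [totalDegree_C]
    exact max_le (td_Ppoly h) (by norm_num)
  have b1 : (∏ j ∈ range 7, (Ppoly h + C ((j : ℚ) + 1))).totalDegree ≤ 14 := by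
    refine (MvPolynomial.totalDegree_finset_prod _ _).trans
      (le_trans (Finset.sum_le_sum step1) ?_)
    simp
  have step2 : ∀ j ∈ range 15, (Qpoly (n := n) + C ((j : ℚ) + 1)).totalDegree ≤ 1 := by
    intro j _
    refine (MvPolynomial.totalDegree_add _ _).trans ?_
    simp only [totalDegree_C]
    exact max_le td_Qpoly (by norm_num)
  have b2 : (∏ j ∈ range 15, (Qpoly (n := n) + C ((j : ℚ) + 1))).totalDegree ≤ 15 := by
    refine (MvPolynomial.totalDegree_finset_prod _ _).trans
      (le_trans (Finset.sum_le_sum step2) ?_)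
    simp
  omega

end EGZAux

open EGZAux

theorem stmt_9 (g : Fin 30 → ℤ) :
    ∃ J : Finset (Fin 30), J.card = 16 ∧ (8 : ℤ) ∣ eSym 2 g J := by
  classical
  set h : Fin 30 → ℕ := fun i => (g i % 8).toNat with hh
  set v : Finset (Fin 30) → ℕ :=
    fun S => (pval h S + 7).choose 7 * (S.card + 15).choose 15 with hv
  -- Step 1: alternating sum of v over the cube is 0 (in ℚ).
  have hA : ∑ S ∈ (univ : Finset (Fin 30)).powerset, (-1:ℚ)^S.card * (v S : ℚ) = 0 := by
    have h0 := alt_sum_zero (Fpoly h) (lt_of_le_of_lt (td_Fpoly h) (by norm_num))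
    rw [← h0]
    refine Finset.sum_congr rfl fun S _ => ?_
    congr 1
    show (v S : ℚ) = MvPolynomial.eval (chi S) (Fpoly h)
    rw [eval_Fpoly]
    simp only [hv]
    push_cast
    ring
  -- Step 2: transfer to ℤ, then to ZMod 2.
  have hZ : ∑ S ∈ (univ : Finset (Fin 30)).powerset, (-1:ℤ)^S.card * (v S : ℤ) = 0 := by
    exact_mod_cast hA
  have h2 : ((∑ S ∈ (univ : Finset (Fin 30)).powerset, v S : ℕ) : ZMod 2) = 0 := by
    have hc := congrArg (fun z : ℤ => (z : ZMod 2)) hZ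
    push_cast at hc
    rw [show ((-1 : ZMod 2) = 1) from by decide] at hc
    push_cast
    simpa using hc
  have hdvd : 2 ∣ ∑ S ∈ (univ : Finset (Fin 30)).powerset, v S :=
    (ZMod.natCast_eq_zero_iff _ 2).mp h2
  -- Step 3: v ∅ = 1.
  have hp0 : pval h ∅ = 0 := by
    have he : ((∅ : Finset (Fin 30)).powersetCard 2) = ∅ := by
      ext T
      simp only [Finset.mem_powersetCard, Finset.notMem_empty, iff_false, not_and]
      intro hT
      have hTe := Finset.subset_empty.mp hT
      subst hTe
      simp
    rw [pval, he, Finset.sum_empty]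
  have hvempty : v ∅ = 1 := by
    simp [hv, hp0, Nat.choose_self]
  -- Step 4: find a nonempty S with v S odd.
  have hex : ∃ S ∈ (univ : Finset (Fin 30)).powerset, S ≠ ∅ ∧ ¬ 2 ∣ v S := by
    by_contra hc
    push_neg at hc
    have hall : ∀ S ∈ ((univ : Finset (Fin 30)).powerset).erase ∅, 2 ∣ v S := by
      intro S hS
      obtain ⟨hne, hmem⟩ := Finset.mem_erase.mp hS
      exact hc S hmem (Finset.nonempty_iff_ne_empty.mpr hne)
    have hd2 : 2 ∣ ∑ S ∈ ((univ : Finset (Fin 30)).powerset).erase ∅, v S :=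
      Finset.dvd_sum hall
    have hsplit : ∑ S ∈ (univ : Finset (Fin 30)).powerset, v S
        = v ∅ + ∑ S ∈ ((univ : Finset (Fin 30)).powerset).erase ∅, v S :=
      (Finset.add_sum_erase _ v (Finset.mem_powerset.mpr (Finset.empty_subset _))).symm
    omega
  obtain ⟨S, hSmem, hSne, hSodd⟩ := hex
  simp only [hv] at hSodd
  have hodd : Odd ((pval h S + 7).choose 7 * (S.card + 15).choose 15) := by
    rw [Nat.odd_iff]
    omega
  rw [Nat.odd_mul] at hodd
  obtain ⟨hodd1, hodd2⟩ := hodd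
  have h8 : 8 ∣ pval h S := by
    have := key_parity 3 (pval h S) (by norm_num; exact hodd1)
    norm_num at this
    exact this
  have h16 : 16 ∣ S.card := by
    have := key_parity 4 S.card (by norm_num; exact hodd2)
    norm_num at this
    exact this
  have hcard : S.card = 16 := by
    have hle : S.card ≤ 30 := by
      have := Finset.card_le_card (Finset.mem_powerset.mp hSmem)
      simpa using this
    have hpos : 0 < S.card := Finset.card_pos.mpr (Finset.nonempty_iff_ne_empty.mpr hSne)
    omega
  refine ⟨S, hcard, ?_⟩
  -- Step 5: 8 ∣ eSym 2 g S via ZMod 8.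
  have hcast : ((eSym 2 g S : ℤ) : ZMod 8) = ((pval h S : ℕ) : ZMod 8) := by
    rw [eSym, pval]
    push_cast
    refine Finset.sum_congr rfl fun T _ => Finset.prod_congr rfl fun i _ => ?_
    show ((g i : ZMod 8)) = ((h i : ℕ) : ZMod 8)
    have hnn : (0:ℤ) ≤ g i % 8 := Int.emod_nonneg _ (by norm_num)
    have h1 : ((g i % 8 : ℤ) : ZMod 8) = ((g i : ℤ) : ZMod 8) := by
      rw [ZMod.intCast_eq_intCast_iff]
      show (g i % 8) % 8 = (g i) % 8
      exact Int.emod_emod_of_dvd (g i) dvd_rfl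
    calc ((g i : ℤ) : ZMod 8) = ((g i % 8 : ℤ) : ZMod 8) := h1.symm
      _ = (((g i % 8).toNat : ℕ) : ZMod 8) := by
          rw [← Int.cast_natCast, Int.toNat_of_nonneg hnn]
      _ = ((h i : ℕ) : ZMod 8) := by simp only [hh]
  have hz : ((eSym 2 g S : ℤ) : ZMod 8) = 0 := by
    rw [hcast]
    rw [ZMod.natCast_eq_zero_iff]
    exact h8
  have := (ZMod.intCast_zmod_eq_zero_iff_dvd (eSym 2 g S) 8).mp hz
  exact_mod_cast this
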